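/- Let k, α be positive integers with α dividing k, and let δ be a real with 0 < δ ≤ 1/2 and δ²·α ≥ 12·ln(k/α). Suppose m ≤ (1−δ)·k balls are thrown independently and uniformly at random into k/α bins. Then the probability that the maximum load among all bins is greater than α is at most exp(−δ²·α/12). -/

import Mathlib

open scoped Classical

set_option maxHeartbeats 1000000

/-- **Balls and bins (Lemma 4.7).** Let `α ∣ k`, `0 < δ ≤ 1/2` with
`δ²α ≥ 12 ln(k/α)`, and let `m ≤ (1-δ)k` balls be thrown independently and uniformly
at random into `k/α` bins. Then the probability that some bin receives more than `α`
balls is at most `exp(-δ²α/12)`. -/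
theorem ballsAndBins_overflow_probability
    (k α m : ℕ) (hk : 0 < k) (hα : 0 < α) (hdvd : α ∣ k)
    (δ : ℝ) (hδ0 : 0 < δ) (hδhalf : δ ≤ 1 / 2)
    (hδα : 12 * Real.log ((k : ℝ) / (α : ℝ)) ≤ δ ^ 2 * α)
    (hm : (m : ℝ) ≤ (1 - δ) * k) :
    ((Finset.univ.filter (fun g : Fin m → Fin (k / α) =>
        ∃ b : Fin (k / α),
          α < (Finset.univ.filter (fun i : Fin m => g i = b)).card)).card : ℝ) /
      (Fintype.card (Fin m → Fin (k / α)) : ℝ) ≤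
      Real.exp (-(δ ^ 2 * α) / 12) := by
  
  have hδ1 : δ < 1 := lt_of_le_of_lt hδhalf (by norm_num)
  have h1δ : (0:ℝ) < 1 - δ := by linarith
  set n := k / α with hn
  have hn0 : 0 < n := Nat.div_pos (Nat.le_of_dvd hk hdvd) hα
  have hkna : k = n * α := (Nat.div_mul_cancel hdvd).symm
  have hnR : (1:ℝ) ≤ (n:ℝ) := by exact_mod_cast hn0
  have hkR : (k:ℝ) = (n:ℝ) * (α:ℝ) := by exact_mod_cast congrArg (Nat.cast : ℕ → ℝ) hkna
  set x : ℝ := 1 / (1 - δ) with hxdef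
  have hx1 : 1 < x := by
    rw [hxdef, lt_div_iff₀ h1δ]; linarith
  have hx0 : (0:ℝ) < x := by linarith
  -- log bound : δ + δ²/4 ≤ log x
  have hlog : δ + δ^2/4 ≤ Real.log x := by
    have hsq : Real.sqrt (1-δ) ≤ 1 - δ/2 - δ^2/8 := by
      have h1 : (1:ℝ) - δ ≤ (1 - δ/2 - δ^2/8)^2 := by nlinarith
      have h2 : (0:ℝ) ≤ 1 - δ/2 - δ^2/8 := by nlinarith
      calc Real.sqrt (1-δ) ≤ Real.sqrt ((1 - δ/2 - δ^2/8)^2) := Real.sqrt_le_sqrt h1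
        _ = 1 - δ/2 - δ^2/8 := Real.sqrt_sq h2
    have hs0 : 0 < Real.sqrt (1-δ) := Real.sqrt_pos.mpr h1δ
    have hls : Real.log (Real.sqrt (1-δ)) ≤ Real.sqrt (1-δ) - 1 :=
      Real.log_le_sub_one_of_pos hs0
    have hlhalf : Real.log (Real.sqrt (1-δ)) = Real.log (1-δ) / 2 :=
      Real.log_sqrt h1δ.le
    have hl1δ : Real.log (1-δ) ≤ -δ - δ^2/4 := by
      rw [hlhalf] at hls; nlinarith
    have : Real.log x = - Real.log (1-δ) := by
      rw [hxdef, one_div, Real.log_inv]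
    rw [this]; linarith
  -- per-bin load count abbreviation
  set load : (Fin m → Fin n) → Fin n → ℕ :=
    fun g b => (Finset.univ.filter (fun i : Fin m => g i = b)).card with hload
  -- MGF identity
  have hmgf : ∀ b : Fin n,
      (∑ g : Fin m → Fin n, x ^ (load g b)) = (x + ((n:ℝ) - 1)) ^ m := by
    intro b
    have hstep : ∀ g : Fin m → Fin n,
        x ^ (load g b) = ∏ i : Fin m, (if g i = b then x else 1) := by
      intro g
      rw [Finset.prod_ite, Finset.prod_const, Finset.prod_const_one, mul_one]
    simp_rw [hstep]
    have hps : (∑ g : Fin m → Fin n, ∏ i : Fin m, (if g i = b then x else 1))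
        = ∏ i : Fin m, ∑ a : Fin n, (if a = b then x else 1) := by
      rw [← Fintype.piFinset_univ]
      exact (Finset.prod_univ_sum (fun _ : Fin m => (Finset.univ : Finset (Fin n)))
        (fun _ a => if a = b then x else 1)).symm
    rw [hps]
    have hsum : (∑ a : Fin n, (if a = b then x else 1)) = x + ((n:ℝ) - 1) := by
      have h1 : ∀ a : Fin n, (if a = b then x else 1)
          = (if a = b then x - 1 else 0) + 1 := by
        intro a; split <;> ring
      rw [Finset.sum_congr rfl (fun a _ => h1 a), Finset.sum_add_distrib,
        Finset.sum_ite_eq', Finset.sum_const]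
      simp [Finset.card_univ]
      ring
    simp_rw [hsum, Finset.prod_const, Finset.card_univ, Fintype.card_fin]
  -- tail bound per bin
  have htail : ∀ b : Fin n,
      ((Finset.univ.filter (fun g : Fin m → Fin n => α < load g b)).card : ℝ)
        * x ^ (α+1) ≤ (x + ((n:ℝ) - 1)) ^ m := by
    intro b
    rw [← hmgf b]
    calc ((Finset.univ.filter (fun g : Fin m → Fin n => α < load g b)).card : ℝ) * x ^ (α+1)
        = ∑ _g ∈ Finset.univ.filter (fun g : Fin m → Fin n => α < load g b), x ^ (α+1) := by
          rw [Finset.sum_const, nsmul_eq_mul]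
      _ ≤ ∑ g ∈ Finset.univ.filter (fun g : Fin m → Fin n => α < load g b), x ^ (load g b) := by
          refine Finset.sum_le_sum (fun g hg => ?_)
          have := (Finset.mem_filter.mp hg).2
          exact pow_le_pow_right₀ hx1.le this
      _ ≤ ∑ g : Fin m → Fin n, x ^ (load g b) := by
          refine Finset.sum_le_sum_of_subset_of_nonneg (Finset.filter_subset _ _)
            (fun g _ _ => pow_nonneg hx0.le _)
  -- union bound
  have hunion : ((Finset.univ.filter (fun g : Fin m → Fin n =>
      ∃ b : Fin n, α < load g b)).card : ℝ) * x ^ (α+1)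
      ≤ (n:ℝ) * (x + ((n:ℝ) - 1)) ^ m := by
    have hsub : Finset.univ.filter (fun g : Fin m → Fin n => ∃ b : Fin n, α < load g b)
        ⊆ Finset.univ.biUnion (fun b : Fin n =>
            Finset.univ.filter (fun g : Fin m → Fin n => α < load g b)) := by
      intro g hg
      obtain ⟨b, hb⟩ := (Finset.mem_filter.mp hg).2
      exact Finset.mem_biUnion.mpr ⟨b, Finset.mem_univ b, Finset.mem_filter.mpr ⟨Finset.mem_univ g, hb⟩⟩
    have hcard : ((Finset.univ.filter (fun g : Fin m → Fin n =>
        ∃ b : Fin n, α < load g b)).card : ℝ)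
        ≤ ∑ b : Fin n, ((Finset.univ.filter (fun g : Fin m → Fin n => α < load g b)).card : ℝ) := by
      have := (Finset.card_le_card hsub).trans Finset.card_biUnion_le
      exact_mod_cast this
    calc ((Finset.univ.filter (fun g : Fin m → Fin n => ∃ b : Fin n, α < load g b)).card : ℝ) * x ^ (α+1)
        ≤ (∑ b : Fin n, ((Finset.univ.filter (fun g : Fin m → Fin n => α < load g b)).card : ℝ)) * x ^ (α+1) := by
          exact mul_le_mul_of_nonneg_right hcard (pow_nonneg hx0.le _)
      _ = ∑ b : Fin n, ((Finset.univ.filter (fun g : Fin m → Fin n => α < load g b)).card : ℝ) * x ^ (α+1) := by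
          rw [Finset.sum_mul]
      _ ≤ ∑ _b : Fin n, (x + ((n:ℝ) - 1)) ^ m := Finset.sum_le_sum (fun b _ => htail b)
      _ = (n:ℝ) * (x + ((n:ℝ) - 1)) ^ m := by
          rw [Finset.sum_const, nsmul_eq_mul, Finset.card_univ, Fintype.card_fin]
  -- analytic bounds
  have hnexp : (n:ℝ) ≤ Real.exp (δ^2*α/12) := by
    have hlogn : Real.log (n:ℝ) ≤ δ^2*α/12 := by
      have : (k:ℝ)/(α:ℝ) = (n:ℝ) := by
        rw [hkR]; field_simp
      rw [this] at hδα; linarith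
    calc (n:ℝ) = Real.exp (Real.log (n:ℝ)) := (Real.exp_log (by linarith)).symm
      _ ≤ Real.exp (δ^2*α/12) := Real.exp_le_exp.mpr hlogn
  have hpow : (x + ((n:ℝ) - 1)) ^ m ≤ (n:ℝ)^m * Real.exp (δ*α) := by
    have hbase : x + ((n:ℝ) - 1) ≤ (n:ℝ) * Real.exp ((x-1)/(n:ℝ)) := by
      have h1 : 1 + (x-1)/(n:ℝ) ≤ Real.exp ((x-1)/(n:ℝ)) := by
        have := Real.add_one_le_exp ((x-1)/(n:ℝ)); linarith
      have h2 : x + ((n:ℝ) - 1) = (n:ℝ) * (1 + (x-1)/(n:ℝ)) := by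
        field_simp; ring
      rw [h2]
      exact mul_le_mul_of_nonneg_left h1 (by linarith)
    have hbase0 : (0:ℝ) ≤ x + ((n:ℝ) - 1) := by linarith
    calc (x + ((n:ℝ) - 1)) ^ m ≤ ((n:ℝ) * Real.exp ((x-1)/(n:ℝ))) ^ m :=
          pow_le_pow_left₀ hbase0 hbase m
      _ = (n:ℝ)^m * Real.exp ((x-1)/(n:ℝ)) ^ m := mul_pow _ _ m
      _ = (n:ℝ)^m * Real.exp ((m:ℝ) * ((x-1)/(n:ℝ))) := by rw [Real.exp_nat_mul]
      _ ≤ (n:ℝ)^m * Real.exp (δ*α) := by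
          refine mul_le_mul_of_nonneg_left (Real.exp_le_exp.mpr ?_) (by positivity)
          have hx1' : x - 1 = δ/(1-δ) := by rw [hxdef]; field_simp; ring
          have hmk : (m:ℝ) ≤ (1-δ) * ((n:ℝ)*(α:ℝ)) := by rw [← hkR]; exact hm
          have hpos : (0:ℝ) < (1-δ) * (n:ℝ) := by nlinarith
          rw [hx1', div_div, ← mul_div_assoc, div_le_iff₀ hpos]
          nlinarith [mul_le_mul_of_nonneg_left hmk hδ0.le]
  have hxpow : Real.exp ((α:ℝ)*(δ + δ^2/4)) ≤ x ^ (α+1) := by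
    have h1 : x ^ (α+1) = Real.exp (((α:ℝ)+1) * Real.log x) := by
      rw [show ((α:ℝ)+1) = ((α+1 : ℕ):ℝ) by push_cast; ring, Real.exp_nat_mul, Real.exp_log hx0]
    rw [h1]
    refine Real.exp_le_exp.mpr ?_
    have hlogx0 : 0 ≤ Real.log x := by nlinarith
    nlinarith [mul_le_mul_of_nonneg_left hlog (by positivity : (0:ℝ) ≤ (α:ℝ))]
  -- assemble
  have hN : (Fintype.card (Fin m → Fin n) : ℝ) = (n:ℝ)^m := by
    rw [Fintype.card_fun, Fintype.card_fin, Fintype.card_fin]; push_cast; ring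
  rw [hN, div_le_iff₀ (by positivity)]
  -- goal : bad ≤ exp(-(δ²α)/12) * n^m
  have hxpos : (0:ℝ) < x ^ (α+1) := pow_pos hx0 _
  rw [← mul_le_mul_iff_of_pos_right hxpos]
  calc ((Finset.univ.filter (fun g : Fin m → Fin n => ∃ b : Fin n, α < load g b)).card : ℝ) * x ^ (α+1)
      ≤ (n:ℝ) * (x + ((n:ℝ) - 1)) ^ m := hunion
    _ ≤ Real.exp (δ^2*α/12) * ((n:ℝ)^m * Real.exp (δ*α)) := by
        refine mul_le_mul hnexp hpow (pow_nonneg (by linarith) m) (by positivity)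
    _ = (n:ℝ)^m * (Real.exp (δ^2*α/12) * Real.exp (δ*α)) := by ring
    _ = (n:ℝ)^m * Real.exp (δ^2*α/12 + δ*α) := by rw [← Real.exp_add]
    _ ≤ (n:ℝ)^m * (Real.exp (-(δ^2*α)/12) * Real.exp ((α:ℝ)*(δ + δ^2/4))) := by
        rw [← Real.exp_add]
        refine mul_le_mul_of_nonneg_left (Real.exp_le_exp.mpr ?_) (by positivity)
        nlinarith [sq_nonneg δ, (Nat.cast_nonneg α : (0:ℝ) ≤ (α:ℝ))]
    _ ≤ (n:ℝ)^m * (Real.exp (-(δ^2*α)/12) * x ^ (α+1)) := by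
        refine mul_le_mul_of_nonneg_left (mul_le_mul_of_nonneg_left hxpow (by positivity)) (by positivity)
    _ = Real.exp (-(δ^2*α)/12) * (n:ℝ)^m * x ^ (α+1) := by ring
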